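/- Let ⟨,⟩: H₁ ⊗ H₂ → k be a pairing between Hopf algebras H₁ and H₂. If A is a partial H₂-comodule algebra with coaction ρ̄(a) = Σ a⁽⁰⁾ ⊗ a⁽¹⁾, then A becomes a partial H₁-module algebra via the partial action h · a = Σ a⁽⁰⁾ ⟨h, a⁽¹⁾⟩ for h ∈ H₁, a ∈ A. -/

import Mathlib

/-!
STATEMENT 5: If `⟨,⟩ : H₁ ⊗ H₂ → k` is a Hopf pairing and `A` is a partial `H₂`-comodule
algebra, then `A` becomes a partial `H₁`-module algebra via `h · a = ∑ a⁽⁰⁾ ⟨h, a⁽¹⁾⟩`.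
-/

open TensorProduct

/-- The axioms of a (right) partial coaction `ρ : A → A ⊗ H` of a Hopf algebra `H` on a
unital algebra `A`. -/
structure IsPartialCoaction (k : Type*) [Field k] (H A : Type*) [Ring H] [HopfAlgebra k H]
    [Ring A] [Algebra k A] (ρ : A →ₗ[k] A ⊗[k] H) : Prop where
  map_mul : ∀ a b : A, ρ (a * b) = ρ a * ρ b
  counit_id : ∀ a : A,
    (TensorProduct.rid k A) ((LinearMap.lTensor A Coalgebra.counit) (ρ a)) = a
  coassoc : ∀ a : A,
    (LinearMap.rTensor H ρ) (ρ a) =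
      (ρ 1 ⊗ₜ[k] (1 : H)) *
        ((TensorProduct.assoc k A H H).symm ((LinearMap.lTensor A Coalgebra.comul) (ρ a)))

/-- The axioms of a pairing between two Hopf algebras `H₁` and `H₂`. -/
structure IsHopfPairing (k : Type*) [Field k] (H₁ H₂ : Type*)
    [Ring H₁] [HopfAlgebra k H₁] [Ring H₂] [HopfAlgebra k H₂]
    (p : H₁ →ₗ[k] H₂ →ₗ[k] k) : Prop where
  mul_left : ∀ {ι : Type*} (h g : H₁) (f : H₂) (r : Coalgebra.Repr k f ι),
    p (h * g) f = ∑ i ∈ r.index, p h (r.left i) * p g (r.right i)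
  mul_right : ∀ {ι : Type*} (h : H₁) (f f' : H₂) (r : Coalgebra.Repr k h ι),
    p h (f * f') = ∑ i ∈ r.index, p (r.left i) f * p (r.right i) f'
  one_left : ∀ f : H₂, p 1 f = Coalgebra.counit f
  one_right : ∀ h : H₁, p h 1 = Coalgebra.counit h

/-- The axioms of a (left) partial action of a Hopf algebra `H` on a unital algebra `A`. -/
structure IsPartialAction (k : Type*) [Field k] (H A : Type*) [Ring H] [HopfAlgebra k H]
    [Ring A] [Algebra k A] (pact : H →ₗ[k] A →ₗ[k] A) : Prop where
  one_act : ∀ a : A, pact 1 a = a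
  act_mul : ∀ {ι : Type*} (h : H) (a b : A) (r : Coalgebra.Repr k h ι),
    pact h (a * b) = ∑ i ∈ r.index, pact (r.left i) a * pact (r.right i) b
  act_act : ∀ {ι : Type*} (h g : H) (a : A) (r : Coalgebra.Repr k h ι),
    pact h (pact g a) = ∑ i ∈ r.index, pact (r.left i) 1 * pact (r.right i * g) a

section MyAux



noncomputable def myReindex.{u} {R : Type*} {A : Type*} {ι : Type*} [CommSemiring R] [AddCommMonoid A]
    [Module R A] [CoalgebraStruct R A] {a : A} (r : Coalgebra.Repr R a ι) :
    Coalgebra.Repr R a (ULift.{u} (Fin r.index.card)) where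
  index := (Finset.univ : Finset (ULift.{u} (Fin r.index.card)))
  left := fun i => r.left (r.index.equivFin.symm i.down : {x // x ∈ r.index})
  right := fun i => r.right (r.index.equivFin.symm i.down : {x // x ∈ r.index})
  eq := by
    rw [← r.eq]
    calc ∑ i : ULift.{u} (Fin r.index.card),
          r.left ((r.index.equivFin.symm i.down : {x // x ∈ r.index}) : _) ⊗ₜ[R]
            r.right ((r.index.equivFin.symm i.down : {x // x ∈ r.index}) : _)
        = ∑ j : {x // x ∈ r.index}, r.left (j : _) ⊗ₜ[R] r.right (j : _) :=
          Equiv.sum_comp (Equiv.ulift.trans r.index.equivFin.symm)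
            (fun j : {x // x ∈ r.index} => r.left (j : _) ⊗ₜ[R] r.right (j : _))
      _ = ∑ j ∈ r.index, r.left j ⊗ₜ[R] r.right j :=
          Finset.sum_coe_sort r.index (fun j => r.left j ⊗ₜ[R] r.right j)

lemma reprSum {R A M : Type*} [CommSemiring R] [AddCommMonoid A] [Module R A]
    [CoalgebraStruct R A] [AddCommMonoid M] [Module R M] {a : A} {ι : Type*}
    (r : Coalgebra.Repr R a ι) (B : A →ₗ[R] A →ₗ[R] M) :
    ∑ i ∈ r.index, B (r.left i) (r.right i) = TensorProduct.lift B (Coalgebra.comul a) := by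
  rw [← r.eq, map_sum]
  simp

lemma reprSum_congr {R A M : Type*} [CommSemiring R] [AddCommMonoid A] [Module R A]
    [CoalgebraStruct R A] [AddCommMonoid M] [Module R M] {a : A} {ι ι' : Type*}
    (r : Coalgebra.Repr R a ι) (r' : Coalgebra.Repr R a ι') (B : A →ₗ[R] A →ₗ[R] M) :
    ∑ i ∈ r.index, B (r.left i) (r.right i) =
      ∑ i ∈ r'.index, B (r'.left i) (r'.right i) := by
  rw [reprSum, reprSum]


noncomputable def Lf (k : Type*) [Field k] (A M : Type*) [AddCommGroup A] [Module k A]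
    [AddCommGroup M] [Module k M] (φ : M →ₗ[k] k) : A ⊗[k] M →ₗ[k] A :=
  (TensorProduct.rid k A).toLinearMap ∘ₗ LinearMap.lTensor A φ

lemma Lf_tmul (k : Type*) [Field k] (A M : Type*) [AddCommGroup A] [Module k A]
    [AddCommGroup M] [Module k M] (φ : M →ₗ[k] k) (a : A) (m : M) :
    Lf k A M φ (a ⊗ₜ[k] m) = φ m • a := by
  simp [Lf]

lemma Lf_add (k : Type*) [Field k] (A M : Type*) [AddCommGroup A] [Module k A]
    [AddCommGroup M] [Module k M] (φ ψ : M →ₗ[k] k) :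
    Lf k A M (φ + ψ) = Lf k A M φ + Lf k A M ψ := by
  ext a m
  simp [Lf_tmul, add_smul]

lemma Lf_smul (k : Type*) [Field k] (A M : Type*) [AddCommGroup A] [Module k A]
    [AddCommGroup M] [Module k M] (c : k) (φ : M →ₗ[k] k) :
    Lf k A M (c • φ) = c • Lf k A M φ := by
  ext a m
  simp [Lf_tmul, smul_smul]

variable {k : Type*} [Field k] {H₁ H₂ A : Type*}
    [Ring H₁] [HopfAlgebra k H₁] [Ring H₂] [HopfAlgebra k H₂] [Ring A] [Algebra k A]
    (p : H₁ →ₗ[k] H₂ →ₗ[k] k)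

/-- `mul_right` of a Hopf pairing, for a representation in an arbitrary universe. -/
lemma hp_mul_right' (hp : IsHopfPairing k H₁ H₂ p) (h : H₁) (f f' : H₂)
    {ι : Type*} (r : Coalgebra.Repr k h ι) :
    p h (f * f') = ∑ i ∈ r.index, p (r.left i) f * p (r.right i) f' := by
  rw [hp.mul_right h f f' (myReindex r)]
  have := reprSum_congr (myReindex r) r
    (LinearMap.mk₂ k (fun x y => p x f * p y f')
      (fun m m' n => by simp [add_mul])
      (fun c m n => by simp only [map_smul, LinearMap.smul_apply, smul_eq_mul]; ring)
      (fun m n n' => by simp [mul_add])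
      (fun c m n => by simp only [map_smul, LinearMap.smul_apply, smul_eq_mul]; ring))
  simpa using this

/-- `mul_left` of a Hopf pairing, for a representation in an arbitrary universe. -/
lemma hp_mul_left' (hp : IsHopfPairing k H₁ H₂ p) (h g : H₁) (f : H₂)
    {ι : Type*} (r : Coalgebra.Repr k f ι) :
    p (h * g) f = ∑ i ∈ r.index, p h (r.left i) * p g (r.right i) := by
  rw [hp.mul_left h g f (myReindex r)]
  have := reprSum_congr (myReindex r) r
    (LinearMap.mk₂ k (fun x y => p h x * p g y)
      (fun m m' n => by simp [add_mul])
      (fun c m n => by simp only [map_smul, LinearMap.smul_apply, smul_eq_mul]; ring)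
      (fun m n n' => by simp [mul_add])
      (fun c m n => by simp only [map_smul, LinearMap.smul_apply, smul_eq_mul]; ring))
  simpa using this

lemma Lf_mul (hp : IsHopfPairing k H₁ H₂ p) (h : H₁) {ι : Type*} (r : Coalgebra.Repr k h ι)
    (u v : A ⊗[k] H₂) :
    Lf k A H₂ (p h) (u * v) =
      ∑ i ∈ r.index, Lf k A H₂ (p (r.left i)) u * Lf k A H₂ (p (r.right i)) v := by
  induction u using TensorProduct.induction_on with
  | zero => simp
  | add x y hx hy => simp [add_mul, hx, hy, Finset.sum_add_distrib]
  | tmul a f =>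
    induction v using TensorProduct.induction_on with
    | zero => simp
    | add x y hx hy => simp [mul_add, hx, hy, Finset.sum_add_distrib]
    | tmul b g' =>
      rw [Algebra.TensorProduct.tmul_mul_tmul, Lf_tmul, hp_mul_right' p hp h f g' r,
        Finset.sum_smul]
      refine Finset.sum_congr rfl fun i _ => ?_
      rw [Lf_tmul, Lf_tmul, smul_mul_smul_comm]

lemma Lf_key (hp : IsHopfPairing k H₁ H₂ p) (h g : H₁) {ι : Type*} (r : Coalgebra.Repr k h ι)
    (u : A ⊗[k] H₂) (z : (A ⊗[k] H₂) ⊗[k] H₂) :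
    Lf k A H₂ (p g) ((LinearMap.rTensor H₂ (Lf k A H₂ (p h))) ((u ⊗ₜ[k] (1 : H₂)) * z)) =
      ∑ i ∈ r.index, Lf k A H₂ (p (r.left i)) u *
        Lf k A H₂ (p g) ((LinearMap.rTensor H₂ (Lf k A H₂ (p (r.right i)))) z) := by
  induction z using TensorProduct.induction_on with
  | zero => simp
  | add x y hx hy => simp [mul_add, hx, hy, Finset.sum_add_distrib]
  | tmul w f' =>
    rw [Algebra.TensorProduct.tmul_mul_tmul, one_mul, LinearMap.rTensor_tmul, Lf_tmul,
      Lf_mul p hp h r u w, Finset.smul_sum]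
    refine Finset.sum_congr rfl fun i _ => ?_
    rw [LinearMap.rTensor_tmul, Lf_tmul, mul_smul_comm]

set_option maxHeartbeats 1000000 in
set_option synthInstance.maxHeartbeats 1000000 in
lemma Lf_four (hp : IsHopfPairing k H₁ H₂ p) (x g : H₁) (w : A ⊗[k] H₂) :
    Lf k A H₂ (p (x * g)) w =
      Lf k A H₂ (p g) ((LinearMap.rTensor H₂ (Lf k A H₂ (p x)))
        ((TensorProduct.assoc k A H₂ H₂).symm ((LinearMap.lTensor A Coalgebra.comul) w))) := by
  induction w using TensorProduct.induction_on with
  | zero => simp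
  | add u v hu hv => simp only [map_add, hu, hv]
  | tmul a0 a1 =>
    set s := Coalgebra.Repr.arbitrary k a1 with hs
    rw [Lf_tmul, LinearMap.lTensor_tmul, ← s.eq, TensorProduct.tmul_sum, map_sum, map_sum,
      map_sum, hp_mul_left' p hp x g a1 s, Finset.sum_smul]
    refine Finset.sum_congr rfl fun i _ => ?_
    rw [TensorProduct.assoc_symm_tmul, LinearMap.rTensor_tmul, Lf_tmul, Lf_tmul,
      smul_smul, mul_comm]

end MyAux

set_option maxHeartbeats 1000000 in
set_option synthInstance.maxHeartbeats 400000 in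
/-- **From partial coactions to partial actions along a Hopf pairing.**
If `⟨,⟩ : H₁ ⊗ H₂ → k` is a Hopf pairing and `(A, ρ)` is a partial `H₂`-comodule algebra,
then the map `h · a := ∑ a⁽⁰⁾ ⟨h, a⁽¹⁾⟩ = (I ⊗ ⟨h,−⟩)(ρ a)` is a partial action of `H₁`
on `A`. -/
theorem partial_coaction_to_partial_action
    (k : Type*) [Field k] (H₁ H₂ A : Type*)
    [Ring H₁] [HopfAlgebra k H₁] [Ring H₂] [HopfAlgebra k H₂] [Ring A] [Algebra k A]
    (p : H₁ →ₗ[k] H₂ →ₗ[k] k) (hp : IsHopfPairing k H₁ H₂ p)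
    (ρ : A →ₗ[k] A ⊗[k] H₂) (hρ : IsPartialCoaction k H₂ A ρ) :
    ∃ pact : H₁ →ₗ[k] A →ₗ[k] A,
      (∀ (h : H₁) (a : A),
        pact h a = (TensorProduct.rid k A) ((LinearMap.lTensor A (p h)) (ρ a))) ∧
      IsPartialAction k H₁ A pact := by
  classical
  have hcomm : ∀ (h g : H₁) (w : A ⊗[k] H₂),
      Lf k A H₂ (p h) (ρ (Lf k A H₂ (p g) w)) =
        Lf k A H₂ (p g) ((LinearMap.rTensor H₂ ((Lf k A H₂ (p h)) ∘ₗ ρ)) w) := by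
    intro h g w
    induction w using TensorProduct.induction_on with
    | zero => simp
    | add u v hu hv => simp only [map_add, hu, hv]
    | tmul a0 a1 =>
      rw [Lf_tmul, map_smul, map_smul, LinearMap.rTensor_tmul, LinearMap.comp_apply, Lf_tmul]
  refine ⟨{ toFun := fun h => Lf k A H₂ (p h) ∘ₗ ρ
            map_add' := fun h h' => by
              show Lf k A H₂ (p (h + h')) ∘ₗ ρ = Lf k A H₂ (p h) ∘ₗ ρ + Lf k A H₂ (p h') ∘ₗ ρ
              rw [map_add, Lf_add, LinearMap.add_comp]
            map_smul' := fun c h => by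
              show Lf k A H₂ (p (c • h)) ∘ₗ ρ = (RingHom.id k) c • (Lf k A H₂ (p h) ∘ₗ ρ)
              rw [map_smul, Lf_smul, RingHom.id_apply, LinearMap.smul_comp] },
    fun h a => rfl, ?_, ?_, ?_⟩
  · -- one_act
    intro a
    show Lf k A H₂ (p 1) (ρ a) = a
    have : p 1 = (Coalgebra.counit : H₂ →ₗ[k] k) := LinearMap.ext hp.one_left
    rw [this]
    exact hρ.counit_id a
  · -- act_mul
    intro ι h a b r
    show Lf k A H₂ (p h) (ρ (a * b)) = _
    rw [hρ.map_mul, Lf_mul p hp h r]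
    rfl
  · -- act_act
    intro ι h g a r
    show Lf k A H₂ (p h) (ρ (Lf k A H₂ (p g) (ρ a))) = _
    rw [hcomm h g (ρ a), LinearMap.rTensor_comp, LinearMap.comp_apply, hρ.coassoc a,
      Lf_key p hp h g r (ρ 1)]
    refine Finset.sum_congr rfl fun i _ => ?_
    rw [← Lf_four p hp (r.right i) g (ρ a)]
    rfl
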